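/- Let k be a positive integer and let b⁻ ∈ [0, 1/2) and b⁺ ∈ [1/2, 1) be the roots of the Bernoulli polynomial B_{2k} in those intervals. Then (−1)^{k−1} B_{2k}(x) > 0 for all x with 0 ≤ x < b⁻ or b⁺ < x ≤ 1, and (−1)^{k−1} B_{2k}(x) < 0 for all x with b⁻ < x < b⁺. -/

import Mathlib

open HurwitzZeta Polynomial Set

/-- The `n`-th Bernoulli polynomial evaluated at a real number. -/
noncomputable def bernoulliPoly (n : ℕ) (x : ℝ) : ℝ := Polynomial.aeval x (Polynomial.bernoulli n)

lemma bp_eq (n : ℕ) (x : ℝ) : bernoulliPoly n x = bernoulliFun n x := by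
  rw [bernoulliPoly, bernoulliFun, Polynomial.aeval_def, Polynomial.eval_map]

lemma bfun_hasDeriv (n : ℕ) (x : ℝ) :
    HasDerivAt (bernoulliFun (n + 1)) ((n + 1 : ℕ) * bernoulliFun n x) x := by
  simpa using hasDerivAt_bernoulliFun (n + 1) x

lemma bfun_one (x : ℝ) : bernoulliFun 1 x = x - 1 / 2 := by
  simp [bernoulliFun, Polynomial.bernoulli, Finset.sum_range_succ, _root_.bernoulli_one]
  ring

lemma bfun_diff (n : ℕ) : Differentiable ℝ (bernoulliFun n) :=
  fun x => (hasDerivAt_bernoulliFun n x).differentiableAt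

lemma bfun_reflect (n : ℕ) (x : ℝ) :
    bernoulliFun n (1 - x) = (-1) ^ n * bernoulliFun n x := by
  induction n generalizing x with
  | zero => simp [bernoulliFun]
  | succ n ih =>
    set g : ℝ → ℝ := fun x => bernoulliFun (n + 1) (1 - x) - (-1) ^ (n + 1) * bernoulliFun (n + 1) x with hg
    have hdg : ∀ y, HasDerivAt g 0 y := by
      intro y
      have h1 : HasDerivAt (fun x : ℝ => bernoulliFun (n + 1) (1 - x))
          (((n + 1 : ℕ) * bernoulliFun n (1 - y)) * (-1)) y :=
        (bfun_hasDeriv n (1 - y)).comp y (((hasDerivAt_id y).const_sub 1))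
      have h2 := ((bfun_hasDeriv n y).const_mul ((-1 : ℝ) ^ (n + 1)))
      have := h1.sub h2
      refine this.congr_deriv ?_
      rw [ih]
      push_cast
      ring
    have hconst : g x = g 1 :=
      is_const_of_deriv_eq_zero (fun y => (hdg y).differentiableAt)
        (fun y => (hdg y).deriv) x 1
    have hg1 : g 1 = 0 := by
      simp only [hg, sub_self]
      rcases Nat.even_or_odd (n + 1) with he | ho
      · rw [bernoulliFun_endpoints_eq_of_ne_one (by rintro h; rw [h] at he; exact (Nat.not_even_iff.2 rfl) he),
          he.neg_one_pow, one_mul, sub_self]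
      · rcases eq_or_ne (n + 1) 1 with h1 | h1
        · rw [h1]
          simp [bfun_one, bernoulliFun_eval_zero, _root_.bernoulli_one]
          norm_num
        · rw [bernoulliFun_endpoints_eq_of_ne_one h1, ho.neg_one_pow,
            bernoulliFun_eval_zero,
            bernoulli_eq_bernoulli'_of_ne_one h1,
            bernoulli'_eq_zero_of_odd ho (by omega)]
          norm_num
    have := hconst.trans hg1
    simp only [hg] at this
    linarith

lemma bfun_odd_half (n : ℕ) (hn : Odd n) : bernoulliFun n (1 / 2) = 0 := by
  have := bfun_reflect n (1 / 2)
  rw [hn.neg_one_pow] at this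
  norm_num at this
  linarith

lemma bfun_odd_zero (m : ℕ) : bernoulliFun (2 * m + 3) 0 = 0 := by
  rw [bernoulliFun_eval_zero, bernoulli_eq_bernoulli'_of_ne_one (by omega),
    bernoulli'_eq_zero_of_odd ⟨m + 1, by ring⟩ (by omega)]
  norm_num

lemma bfun_odd_sign (m : ℕ) : ∀ x ∈ Ioo (0 : ℝ) (1 / 2),
    0 < (-1 : ℝ) ^ (m + 1) * bernoulliFun (2 * m + 1) x := by
  induction m with
  | zero =>
    intro x hx
    rw [bfun_one x]
    have hpw : ((-1 : ℝ)) ^ (0 + 1) = -1 := by norm_num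
    rw [hpw]
    nlinarith [hx.1, hx.2]
  | succ m ih =>
    intro x hx
    set c : ℝ := (-1 : ℝ) ^ (m + 2) with hc
    set h : ℝ → ℝ := fun y => c * bernoulliFun (2 * m + 3) y with hh
    have hB3 : ∀ y : ℝ, HasDerivAt (bernoulliFun (2 * m + 3))
        (((2 * m + 3 : ℕ) : ℝ) * bernoulliFun (2 * m + 2) y) y := by
      intro y
      have hs : 2 * m + 3 - 1 = 2 * m + 2 := by omega
      have := hasDerivAt_bernoulliFun (2 * m + 3) y
      rwa [hs] at this
    have hB2 : ∀ y : ℝ, HasDerivAt (bernoulliFun (2 * m + 2))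
        (((2 * m + 2 : ℕ) : ℝ) * bernoulliFun (2 * m + 1) y) y := by
      intro y
      have hs : 2 * m + 2 - 1 = 2 * m + 1 := by omega
      have := hasDerivAt_bernoulliFun (2 * m + 2) y
      rwa [hs] at this
    have hd1 : deriv h = fun y => c * (((2 * m + 3 : ℕ) : ℝ) * bernoulliFun (2 * m + 2) y) :=
      funext fun y => ((hB3 y).const_mul c).deriv
    have hd2 : ∀ y, deriv (deriv h) y
        = c * (((2 * m + 3 : ℕ) : ℝ) * (((2 * m + 2 : ℕ) : ℝ) * bernoulliFun (2 * m + 1) y)) := by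
      intro y
      rw [hd1]
      exact (((hB2 y).const_mul (((2 * m + 3 : ℕ) : ℝ))).const_mul c).deriv
    have hcc : StrictConcaveOn ℝ (Icc (0 : ℝ) (1 / 2)) h :=
      strictConcaveOn_of_deriv2_neg (convex_Icc _ _)
        (((bfun_diff (2 * m + 3)).const_mul c).continuous.continuousOn)
        (by
          intro y hy
          rw [interior_Icc] at hy
          have hit : deriv^[2] h y = deriv (deriv h) y := by
            rw [show (2 : ℕ) = 1 + 1 from rfl, Function.iterate_add_apply]
            simp
          rw [hit, hd2 y]
          have hpos := ih y hy
          have hc' : c = -(-1 : ℝ) ^ (m + 1) := by rw [hc, pow_succ]; ring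
          have hm2 : (0 : ℝ) < ((2 * m + 3 : ℕ) : ℝ) := by positivity
          have hm3 : (0 : ℝ) < ((2 * m + 2 : ℕ) : ℝ) := by positivity
          rw [hc']
          nlinarith [mul_pos (mul_pos hm2 hm3) hpos])
    have h0 : h 0 = 0 := by
      show c * bernoulliFun (2 * m + 3) 0 = 0
      rw [bfun_odd_zero m, mul_zero]
    have hhalf : h (1 / 2) = 0 := by
      show c * bernoulliFun (2 * m + 3) (1 / 2) = 0
      rw [bfun_odd_half (2 * m + 3) ⟨m + 1, by ring⟩, mul_zero]
    have key := hcc.2 (show (0 : ℝ) ∈ Icc (0 : ℝ) (1 / 2) by norm_num [Set.mem_Icc])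
      (show (1 / 2 : ℝ) ∈ Icc (0 : ℝ) (1 / 2) by norm_num [Set.mem_Icc])
      (show (0 : ℝ) ≠ 1 / 2 by norm_num)
      (show (0 : ℝ) < 1 - 2 * x by linarith [hx.2])
      (show (0 : ℝ) < 2 * x by linarith [hx.1])
      (show (1 - 2 * x) + 2 * x = 1 by ring)
    rw [h0, hhalf] at key
    have hx' : (1 - 2 * x) • (0 : ℝ) + (2 * x) • (1 / 2 : ℝ) = x := by
      simp only [smul_eq_mul]; ring
    rw [hx'] at key
    simp only [smul_eq_mul, mul_zero, add_zero, zero_add] at key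
    exact key

/-- For a positive integer `k`, with `b⁻ ∈ [0,1/2)` and `b⁺ ∈ [1/2,1)` the roots of
`B_{2k}` in those intervals: `(-1)^(k-1) B_{2k}(x) > 0` for `0 ≤ x < b⁻` or `b⁺ < x ≤ 1`,
and `(-1)^(k-1) B_{2k}(x) < 0` for `b⁻ < x < b⁺`. -/
theorem bernoulli_even_sign (k : ℕ) (hk : 0 < k) (bm bp : ℝ)
    (hbm : bm ∈ Set.Ico (0 : ℝ) (1 / 2)) (hbm0 : bernoulliPoly (2 * k) bm = 0)
    (hbp : bp ∈ Set.Ico (1 / 2 : ℝ) 1) (hbp0 : bernoulliPoly (2 * k) bp = 0) :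
    (∀ x : ℝ, (0 ≤ x ∧ x < bm) ∨ (bp < x ∧ x ≤ 1) →
        0 < (-1 : ℝ) ^ (k - 1) * bernoulliPoly (2 * k) x) ∧
      (∀ x : ℝ, bm < x → x < bp → (-1 : ℝ) ^ (k - 1) * bernoulliPoly (2 * k) x < 0) := by
  simp only [bp_eq] at hbm0 hbp0 ⊢
  set g : ℝ → ℝ := fun x => (-1 : ℝ) ^ (k - 1) * bernoulliFun (2 * k) x with hgdef
  have hgd : ∀ y : ℝ, HasDerivAt g
      ((-1 : ℝ) ^ (k - 1) * (((2 * k : ℕ) : ℝ) * bernoulliFun (2 * k - 1) y)) y :=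
    fun y => (hasDerivAt_bernoulliFun (2 * k) y).const_mul _
  have hanti : StrictAntiOn g (Icc (0 : ℝ) (1 / 2)) := by
    apply strictAntiOn_of_deriv_neg (convex_Icc _ _)
      (((bfun_diff (2 * k)).const_mul _).continuous.continuousOn)
    intro y hy
    rw [interior_Icc] at hy
    rw [(hgd y).deriv]
    have hodd := bfun_odd_sign (k - 1) y hy
    have hk1 : (k - 1) + 1 = k := by omega
    have hk2 : 2 * (k - 1) + 1 = 2 * k - 1 := by omega
    rw [hk1, hk2] at hodd
    have hc' : (-1 : ℝ) ^ (k - 1) * (-1) = (-1 : ℝ) ^ k := by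
      rw [← pow_succ, hk1]
    have hm : (0 : ℝ) < ((2 * k : ℕ) : ℝ) := by
      have : 0 < 2 * k := by omega
      exact_mod_cast this
    have hre : (-1 : ℝ) ^ (k - 1) * (((2 * k : ℕ) : ℝ) * bernoulliFun (2 * k - 1) y)
        = -(((2 * k : ℕ) : ℝ) * ((-1 : ℝ) ^ k * bernoulliFun (2 * k - 1) y)) := by
      rw [← hc']; ring
    rw [hre]
    linarith [mul_pos hm hodd]
  have hsymm : ∀ x : ℝ, g (1 - x) = g x := by
    intro x
    show (-1 : ℝ) ^ (k - 1) * bernoulliFun (2 * k) (1 - x)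
      = (-1 : ℝ) ^ (k - 1) * bernoulliFun (2 * k) x
    rw [bfun_reflect, (Even.neg_one_pow ⟨k, by ring⟩ : (-1 : ℝ) ^ (2 * k) = 1), one_mul]
  have hbm' : bm ∈ Icc (0 : ℝ) (1 / 2) := ⟨hbm.1, hbm.2.le⟩
  have hbp' : 1 - bp ∈ Icc (0 : ℝ) (1 / 2) := ⟨by linarith [hbp.2], by linarith [hbp.1]⟩
  have gbm : g bm = 0 := by show _ * _ = 0; rw [hbm0, mul_zero]
  have gbp : g (1 - bp) = 0 := by rw [hsymm]; show _ * _ = 0; rw [hbp0, mul_zero]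
  have heq : bm = 1 - bp := hanti.injOn hbm' hbp' (gbm.trans gbp.symm)
  constructor
  · rintro x (⟨hx0, hx1⟩ | ⟨hx0, hx1⟩)
    · have hx' : x ∈ Icc (0 : ℝ) (1 / 2) := ⟨hx0, by linarith [hbm.2]⟩
      have h := hanti hx' hbm' hx1
      show 0 < g x
      linarith [gbm]
    · have h1x : 1 - x ∈ Icc (0 : ℝ) (1 / 2) := ⟨by linarith, by linarith [hbp.1]⟩
      have hlt : 1 - x < bm := by rw [heq]; linarith
      have h := hanti h1x hbm' hlt
      rw [hsymm x] at h
      show 0 < g x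
      linarith [gbm]
  · intro x hx1 hx2
    show g x < 0
    by_cases hhalf : x ≤ 1 / 2
    · have hx' : x ∈ Icc (0 : ℝ) (1 / 2) := ⟨le_trans hbm.1 hx1.le, hhalf⟩
      have h := hanti hbm' hx' hx1
      linarith [gbm]
    · push_neg at hhalf
      have h1x : 1 - x ∈ Icc (0 : ℝ) (1 / 2) := ⟨by linarith [hbp.2], by linarith⟩
      have hlt : bm < 1 - x := by rw [heq]; linarith
      have h := hanti hbm' h1x hlt
      rw [hsymm x] at h
      linarith [gbm]
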